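/- Let q be a prime power and L(t) ∈ F_q[t] a polynomial. Define the map φ : F_q² → F_q² by φ(s,t) = (s, s·t + L(t)). Then the image E of φ satisfies |E| ≥ q³/(2q - 1), and in particular |E| ≥ q²/2. -/
import Mathlib

open Polynomial Finset

private theorem stmt3_collision_count (F : Type*) [Field F] [Fintype F] [DecidableEq F]
    (L : Polynomial F) :
    (Finset.univ.filter fun x : (F × F) × (F × F) =>
      (fun st : F × F => (st.1, st.1 * st.2 + L.eval st.2)) x.1 =
      (fun st : F × F => (st.1, st.1 * st.2 + L.eval st.2)) x.2).card
      = 2 * Fintype.card F ^ 2 - Fintype.card F := by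
  classical
  set q := Fintype.card F with hq
  set S := (Finset.univ.filter fun x : (F × F) × (F × F) =>
      (fun st : F × F => (st.1, st.1 * st.2 + L.eval st.2)) x.1 =
      (fun st : F × F => (st.1, st.1 * st.2 + L.eval st.2)) x.2) with hS
  have hfib := Finset.card_eq_sum_card_fiberwise
    (f := fun x : (F × F) × (F × F) => (x.1.2, x.2.2)) (s := S)
    (t := (Finset.univ : Finset (F × F))) (fun x _ => Finset.mem_univ _)
  have hterm : ∀ tt : F × F,
      (S.filter fun x => (x.1.2, x.2.2) = tt).card = if tt.2 = tt.1 then q else 1 := by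
    rintro ⟨t, t'⟩
    have hcard : (S.filter fun x => (x.1.2, x.2.2) = (t, t')).card =
        (Finset.univ.filter fun s : F =>
          s * t + L.eval t = s * t' + L.eval t').card := by
      apply Finset.card_bij (fun x _ => x.1.1)
      · rintro ⟨⟨s, b⟩, ⟨s', d⟩⟩ hx
        simp only [hS, Finset.mem_filter, Finset.mem_univ, true_and, Prod.mk.injEq] at hx ⊢
        obtain ⟨⟨h1, h2⟩, h3, h4⟩ := hx
        subst h1 h3 h4
        exact h2
      · rintro ⟨⟨s, b⟩, ⟨s', d⟩⟩ hx ⟨⟨a2, b2⟩, ⟨c2, d2⟩⟩ hy h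
        simp only [hS, Finset.mem_filter, Finset.mem_univ, true_and, Prod.mk.injEq] at hx hy
        simp only at h
        obtain ⟨⟨h1, _⟩, h3, h4⟩ := hx
        obtain ⟨⟨g1, _⟩, g3, g4⟩ := hy
        subst h3 h4 g3 g4 h
        simp [← h1, ← g1]
      · intro s hs
        simp only [Finset.mem_filter, Finset.mem_univ, true_and] at hs
        refine ⟨((s, t), (s, t')), ?_, rfl⟩
        simp [hS, hs]
    rw [hcard]
    by_cases h : t' = t
    · simp [h, hq]
    · rw [if_neg h]
      have hsub : t - t' ≠ 0 := sub_ne_zero.mpr (Ne.symm h)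
      have : (Finset.univ.filter fun s : F =>
          s * t + L.eval t = s * t' + L.eval t') =
          {(L.eval t' - L.eval t) / (t - t')} := by
        ext s
        simp only [Finset.mem_filter, Finset.mem_univ, true_and, Finset.mem_singleton]
        rw [eq_div_iff hsub]
        constructor
        · intro h'; linear_combination h'
        · intro h'; linear_combination h'
      rw [this, Finset.card_singleton]
  rw [hfib]
  simp_rw [hterm]
  rw [Fintype.sum_prod_type]
  have hrow : ∀ t : F, (∑ t' : F, if t' = t then q else 1) = 2 * q - 1 := by
    intro t
    rw [← Finset.add_sum_erase _ _ (Finset.mem_univ t), if_pos rfl]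
    rw [Finset.sum_congr rfl (fun t' ht' => if_neg (Finset.ne_of_mem_erase ht'))]
    rw [Finset.sum_const, Finset.card_erase_of_mem (Finset.mem_univ t), Finset.card_univ]
    have hq1 : 1 ≤ q := Fintype.card_pos
    simp only [smul_eq_mul, mul_one]
    omega
  simp_rw [hrow]
  rw [Finset.sum_const, Finset.card_univ]
  simp only [smul_eq_mul]
  rw [Nat.mul_sub, mul_one, pow_two, show q * (2 * q) = 2 * (q * q) by ring]

/-- For a finite field `F_q` and `L ∈ F_q[t]`, the image `E` of
`φ(s,t) = (s, s·t + L(t))` satisfies `|E| ≥ q³/(2q-1)`; in particular `|E| ≥ q²/2`. -/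
theorem stmt3 (F : Type*) [Field F] [Fintype F] (L : Polynomial F) :
    let q : ℕ := Fintype.card F
    let E : Set (F × F) := Set.range (fun st : F × F => (st.1, st.1 * st.2 + L.eval st.2))
    (Nat.card E : ℝ) ≥ (q : ℝ) ^ 3 / (2 * q - 1) ∧ (Nat.card E : ℝ) ≥ (q : ℝ) ^ 2 / 2 := by
  classical
  intro q E
  set f : F × F → F × F := fun st => (st.1, st.1 * st.2 + L.eval st.2) with hf
  have hE : Nat.card E = (Finset.univ.image f).card := by
    rw [Nat.card_coe_set_eq, Set.ncard_eq_toFinset_card', Set.toFinset_range]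
  set I := Finset.univ.image f with hI
  set n : F × F → ℕ := fun e => (Finset.univ.filter fun p => f p = e).card with hn
  -- sum of fiber sizes
  have hsum : ∑ e ∈ I, n e = q ^ 2 := by
    rw [← Finset.card_eq_sum_card_fiberwise (fun x _ => Finset.mem_image_of_mem f (Finset.mem_univ x)),
      Finset.card_univ, Fintype.card_prod, pow_two]
  -- sum of squares of fiber sizes = collision count
  have hsq : ∑ e ∈ I, n e ^ 2 = 2 * q ^ 2 - q := by
    set S := (Finset.univ.filter fun x : (F × F) × (F × F) => f x.1 = f x.2) with hSdef
    have hfib : S.card = ∑ e ∈ I, (S.filter fun x => f x.1 = e).card :=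
      Finset.card_eq_sum_card_fiberwise (fun x hx =>
        Finset.mem_image_of_mem f (Finset.mem_univ x.1))
    have heach : ∀ e ∈ I, (S.filter fun x => f x.1 = e).card = n e ^ 2 := by
      intro e _
      have : (S.filter fun x => f x.1 = e) =
          (Finset.univ.filter fun p => f p = e) ×ˢ (Finset.univ.filter fun p => f p = e) := by
        ext x
        simp only [hSdef, Finset.mem_filter, Finset.mem_univ, true_and, Finset.mem_product]
        constructor
        · rintro ⟨h1, h2⟩; exact ⟨h2, h1 ▸ h2⟩
        · rintro ⟨h1, h2⟩; exact ⟨h1.trans h2.symm, h1⟩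
      rw [this, Finset.card_product, hn, pow_two]
    have hcoll : S.card = 2 * q ^ 2 - q := stmt3_collision_count F L
    rw [← Finset.sum_congr rfl heach, ← hfib, hcoll]
  -- Cauchy–Schwarz
  have hCS : (∑ e ∈ I, (n e : ℝ)) ^ 2 ≤ I.card * ∑ e ∈ I, (n e : ℝ) ^ 2 :=
    sq_sum_le_card_mul_sum_sq
  have hq1 : (1 : ℝ) ≤ (q : ℝ) := by exact_mod_cast Fintype.card_pos
  have hqle : q ≤ 2 * q ^ 2 := by nlinarith [Fintype.card_pos (α := F), show q = Fintype.card F from rfl]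
  have h1 : (∑ e ∈ I, (n e : ℝ)) = (q : ℝ) ^ 2 := by
    rw [← Nat.cast_sum]; exact_mod_cast hsum
  have h2 : (∑ e ∈ I, (n e : ℝ) ^ 2) = 2 * (q : ℝ) ^ 2 - q := by
    have : ((∑ e ∈ I, n e ^ 2 : ℕ) : ℝ) = ((2 * q ^ 2 - q : ℕ) : ℝ) := by exact congrArg (fun k : ℕ => (k : ℝ)) hsq
    rw [Nat.cast_sum] at this
    push_cast [Nat.cast_sub hqle] at this
    convert this using 2
  rw [h1, h2] at hCS
  set c : ℝ := (I.card : ℝ) with hc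
  have hkey : (q : ℝ) ^ 4 ≤ c * ((q : ℝ) * (2 * q - 1)) := by nlinarith [hCS]
  have hpos : (0 : ℝ) < 2 * (q : ℝ) - 1 := by linarith
  have hq0 : (0 : ℝ) < (q : ℝ) := by linarith
  have first : (q : ℝ) ^ 3 / (2 * q - 1) ≤ c := by
    rw [div_le_iff₀ hpos]
    nlinarith [hkey]
  constructor
  · rw [hE]; exact first
  · rw [hE]
    refine le_trans ?_ first
    rw [div_le_div_iff₀ (by norm_num) hpos]
    nlinarith
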